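/- arXiv:1909.12020 — 2 statements merged into one kernel-verified Lean document; each statement's English description precedes it below -/
import Mathlib

section
/- Let 0 < a ≤ e^{−1}, let φ : (0,a] → (0,∞) be a concave index function (continuous, monotonically increasing, φ(λ) → 0 as λ → 0⁺), ρ > 0, and ‖T*T‖ ≤ a. Let x† = φ(T*T)w with ‖w‖ ≤ ρ. For ε ∈ (0,1/2) define Θ_ε(λ) = λ^{1/2−ε}·φ(λ). Then there exist C > 0 and δ̄ > 0 such that for every δ ∈ (0, min(δ̄, Θ(a))] with Θ(λ) = √λ·φ(λ), every y^δ ∈ Y with ‖y^δ − T x†‖ ≤ δ, and every α ∈ (0,a] with Θ_ε(α) = δ, the regularized solution x(δ) = g_α(T*T)T*y^δ satisfies ‖x† − x(δ)‖ ≤ C · α^{−ε} · φ(α). -/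
open ContinuousLinearMap

/-- The generator function `g_α(λ) = 1/(λ + (1 − λ^{√α})²)` with `g_α(0) = 1`,
where `λ^{√α} = exp(√α · log λ)`. -/
noncomputable def genFun (α : ℝ) : ℝ → ℝ := fun t =>
  if t = 0 then 1 else 1 / (t + (1 - Real.exp (Real.sqrt α * Real.log t)) ^ 2)

section AuxReal

lemma aux_sq_le_exp (u : ℝ) (hu : 0 ≤ u) : u ^ 2 ≤ 4 * Real.exp u := by
  have he : Real.exp (u/2) ^ 2 = Real.exp u := by
    rw [sq, ← Real.exp_add]; ring_nf
  nlinarith [Real.add_one_le_exp (u/2), Real.exp_pos (u/2)]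

lemma aux_logsq (ε α : ℝ) (hε : 0 < ε) (hα : 0 < α) (hα1 : α ≤ Real.exp (-1)) :
    (Real.log α) ^ 2 ≤ 4 / ε ^ 2 * α ^ (-ε) := by
  have hx : 0 ≤ -Real.log α := by
    have : Real.log α ≤ -1 := by
      calc Real.log α ≤ Real.log (Real.exp (-1)) :=
        Real.log_le_log (by positivity) hα1
      _ = -1 := Real.log_exp _
    linarith
  have hrw : α ^ (-ε) = Real.exp (ε * (-Real.log α)) := by
    rw [Real.rpow_def_of_pos hα]; ring_nf
  have h := aux_sq_le_exp (ε * (-Real.log α)) (by positivity)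
  rw [hrw]
  have h2 : ε ^ 2 * (Real.log α) ^ 2 ≤ 4 * Real.exp (ε * (-Real.log α)) := by
    nlinarith [h]
  rw [div_mul_eq_mul_div, le_div_iff₀ (by positivity)]
  nlinarith [h2]

lemma aux_one_sub_exp (x : ℝ) (hx : 0 ≤ x) (hx1 : x ≤ 1) :
    Real.exp (-1) * x ≤ 1 - Real.exp (-x) := by
  have h1 : Real.exp (-x) * (Real.exp x - 1) = 1 - Real.exp (-x) := by
    rw [mul_sub, mul_one, ← Real.exp_add, neg_add_cancel, Real.exp_zero]
  have h2 : x ≤ Real.exp x - 1 := by linarith [Real.add_one_le_exp x]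
  have h3 : Real.exp (-1) ≤ Real.exp (-x) := Real.exp_le_exp.mpr (by linarith)
  nlinarith [Real.exp_pos (-x), Real.exp_pos (-1)]

lemma genFun_nonneg {α t : ℝ} (ht : 0 ≤ t) : 0 ≤ genFun α t := by
  rcases eq_or_lt_of_le ht with h | h
  · simp [genFun, ← h]
  · rw [genFun, if_neg (ne_of_gt h)]
    positivity

lemma log_le_neg_one {t : ℝ} (ht : 0 < t) (ht1 : t ≤ Real.exp (-1)) :
    Real.log t ≤ -1 := by
  calc Real.log t ≤ Real.log (Real.exp (-1)) := Real.log_le_log ht ht1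
  _ = -1 := Real.log_exp _

lemma genFun_bound2 (α t : ℝ) (hα : 0 < α) (hα1 : α ≤ 1) (ht : 0 < t)
    (ht1 : t ≤ Real.exp (-1)) :
    genFun α t * (t * genFun α t) ≤ 4 / α := by
  set E := Real.exp (Real.sqrt α * Real.log t) with hE
  set d := (1 - E) ^ 2 with hd
  have hg : genFun α t = 1 / (t + d) := by rw [genFun]; simp [ne_of_gt ht]; rfl
  have hlogt : Real.log t ≤ -1 := log_le_neg_one ht ht1
  have hsa0 : 0 ≤ Real.sqrt α := Real.sqrt_nonneg α
  have hsa1 : Real.sqrt α ≤ 1 := by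
    rw [show (1:ℝ) = Real.sqrt 1 by simp]
    exact Real.sqrt_le_sqrt hα1
  have hEle : E ≤ Real.exp (-Real.sqrt α) := Real.exp_le_exp.mpr (by nlinarith)
  have h1 : Real.exp (-1) * Real.sqrt α ≤ 1 - Real.exp (-Real.sqrt α) :=
    aux_one_sub_exp _ hsa0 hsa1
  have hdge : Real.exp (-2) * α ≤ d := by
    have h2 : Real.exp (-1) * Real.sqrt α ≤ 1 - E := by linarith
    have h3 : (Real.exp (-1) * Real.sqrt α) ^ 2 ≤ (1 - E) ^ 2 :=
      pow_le_pow_left₀ (by positivity) h2 2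
    calc Real.exp (-2) * α = (Real.exp (-1) * Real.sqrt α) ^ 2 := by
          rw [mul_pow, Real.sq_sqrt hα.le, sq, ← Real.exp_add]; norm_num
    _ ≤ d := h3
  have hd0 : 0 ≤ d := sq_nonneg _
  have he2 : (1:ℝ)/8 ≤ Real.exp (-2) := by
    have h : Real.exp 2 = Real.exp 1 ^ 2 := by rw [sq, ← Real.exp_add]; norm_num
    have h2 : Real.exp 1 < 2.7182818286 := Real.exp_one_lt_d9
    rw [Real.exp_neg]
    rw [le_inv_comm₀ (by norm_num) (Real.exp_pos 2)]
    nlinarith [Real.exp_pos 1]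
  have h4 : genFun α t * (t * genFun α t) = t / (t + d) ^ 2 := by
    rw [hg]; field_simp
  rw [h4, div_le_div_iff₀ (by positivity) hα]
  nlinarith [sq_nonneg (t - d), mul_le_mul_of_nonneg_left hdge ht.le, hα.le, ht.le]

lemma resid_mem (α t : ℝ) (ht : 0 ≤ t) :
    0 ≤ 1 - genFun α t * t ∧ 1 - genFun α t * t ≤ 1 := by
  rcases eq_or_lt_of_le ht with h | h
  · simp [genFun, ← h]
  · rw [genFun, if_neg (ne_of_gt h)]
    have hd0 : (0:ℝ) ≤ (1 - Real.exp (Real.sqrt α * Real.log t)) ^ 2 := sq_nonneg _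
    constructor
    · have : 1 / (t + (1 - Real.exp (Real.sqrt α * Real.log t)) ^ 2) * t ≤ 1 := by
        rw [div_mul_eq_mul_div, div_le_one (by positivity)]
        linarith
      linarith
    · have : 0 ≤ 1 / (t + (1 - Real.exp (Real.sqrt α * Real.log t)) ^ 2) * t := by
        positivity
      linarith

lemma resid_le (α t : ℝ) (hα : 0 < α) (ht : α < t) (ht1 : t ≤ Real.exp (-1)) :
    1 - genFun α t * t ≤ α * (Real.log α) ^ 2 / t := by
  have ht0 : 0 < t := hα.trans ht
  set E := Real.exp (Real.sqrt α * Real.log t) with hE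
  set d := (1 - E) ^ 2 with hd
  have hg : genFun α t = 1 / (t + d) := by rw [genFun]; simp [ne_of_gt ht0]; rfl
  have hlogt : Real.log t ≤ -1 := log_le_neg_one ht0 ht1
  have hsa0 : 0 ≤ Real.sqrt α := Real.sqrt_nonneg α
  have hE1 : E ≤ 1 := by
    rw [hE, Real.exp_le_one_iff]
    nlinarith
  have h1 : 1 - E ≤ -(Real.sqrt α * Real.log t) := by
    linarith [Real.add_one_le_exp (Real.sqrt α * Real.log t)]
  have hdle : d ≤ α * (Real.log α) ^ 2 := by
    have h2 : (1 - E) ^ 2 ≤ (-(Real.sqrt α * Real.log t)) ^ 2 :=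
      pow_le_pow_left₀ (by linarith) h1 2
    have hlog2 : (Real.log t) ^ 2 ≤ (Real.log α) ^ 2 := by
      have hlog : Real.log α ≤ Real.log t := Real.log_le_log hα ht.le
      have hlogα : Real.log α ≤ -1 := hlog.trans hlogt
      nlinarith
    calc d ≤ (-(Real.sqrt α * Real.log t)) ^ 2 := h2
    _ = α * (Real.log t) ^ 2 := by rw [neg_sq, mul_pow, Real.sq_sqrt hα.le]
    _ ≤ α * (Real.log α) ^ 2 := by nlinarith
  have hres : 1 - genFun α t * t = d / (t + d) := by
    have htd : t + d ≠ 0 := ne_of_gt (by have : 0 ≤ d := sq_nonneg _; linarith)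
    rw [hg, div_mul_eq_mul_div, one_mul, eq_div_iff htd, sub_mul, div_mul_cancel₀ _ htd]; ring
  rw [hres]
  have hd0 : 0 ≤ d := sq_nonneg _
  calc d / (t + d) ≤ d / t := by gcongr; linarith
  _ ≤ α * (Real.log α) ^ 2 / t := by gcongr

lemma genFun_continuousOn {α : ℝ} (hα : 0 < α) :
    ContinuousOn (genFun α) (Set.Ici 0) := by
  intro t ht
  rcases eq_or_lt_of_le (Set.mem_Ici.mp ht) with h0 | h0
  · subst h0
    have hIci : Set.Ici (0:ℝ) = {0} ∪ Set.Ioi 0 := by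
      ext x; simp [Set.mem_Ici, Set.mem_Ioi, le_iff_lt_or_eq, or_comm, eq_comm]
    rw [ContinuousWithinAt, hIci, nhdsWithin_union, nhdsWithin_singleton]
    have h1 : genFun α 0 = 1 := by simp [genFun]
    rw [Filter.tendsto_sup]
    constructor
    · simpa [h1] using tendsto_pure_nhds (genFun α) 0
    · have hden : Filter.Tendsto
          (fun t : ℝ => t + (1 - Real.exp (Real.sqrt α * Real.log t)) ^ 2)
          (nhdsWithin 0 (Set.Ioi 0)) (nhds 1) := by
        have hlog : Filter.Tendsto Real.log (nhdsWithin 0 (Set.Ioi 0)) Filter.atBot :=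
          Real.tendsto_log_nhdsGT_zero
        have hsa : 0 < Real.sqrt α := Real.sqrt_pos.mpr hα
        have hmul : Filter.Tendsto (fun t : ℝ => Real.sqrt α * Real.log t)
            (nhdsWithin 0 (Set.Ioi 0)) Filter.atBot := hlog.const_mul_atBot hsa
        have hexp : Filter.Tendsto (fun t : ℝ => Real.exp (Real.sqrt α * Real.log t))
            (nhdsWithin 0 (Set.Ioi 0)) (nhds 0) :=
          Real.tendsto_exp_atBot.comp hmul
        have h0' : Filter.Tendsto (fun t : ℝ => t) (nhdsWithin 0 (Set.Ioi 0)) (nhds 0) :=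
          Filter.tendsto_id.mono_left nhdsWithin_le_nhds
        have := h0'.add (((tendsto_const_nhds (x := (1:ℝ))).sub hexp).pow 2)
        simpa using this
      have : Filter.Tendsto (fun t : ℝ =>
          1 / (t + (1 - Real.exp (Real.sqrt α * Real.log t)) ^ 2))
          (nhdsWithin 0 (Set.Ioi 0)) (nhds 1) := by
        have := hden.inv₀ (by norm_num)
        simpa [one_div] using this
      rw [h1]
      refine this.congr' ?_
      filter_upwards [self_mem_nhdsWithin] with x hx
      simp [genFun, (ne_of_gt (Set.mem_Ioi.mp hx))]
  · apply ContinuousAt.continuousWithinAt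
    have hne : (fun x : ℝ => 1 / (x + (1 - Real.exp (Real.sqrt α * Real.log x)) ^ 2))
        =ᶠ[nhds t] genFun α := by
      filter_upwards [eventually_gt_nhds h0] with x hx
      simp [genFun, ne_of_gt hx]
    apply ContinuousAt.congr ?_ hne
    have hden0 : t + (1 - Real.exp (Real.sqrt α * Real.log t)) ^ 2 ≠ 0 := by positivity
    fun_prop (disch := first | exact ne_of_gt h0 | exact hden0)

lemma concave_ratio {a : ℝ} (ha0 : 0 < a) {phi : ℝ → ℝ}
    (hconc : ConcaveOn ℝ (Set.Ioc 0 a) phi)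
    (hpos : ∀ lam ∈ Set.Ioc (0 : ℝ) a, 0 < phi lam)
    {α t : ℝ} (hα : α ∈ Set.Ioc (0:ℝ) a) (ht : t ∈ Set.Ioc (0:ℝ) a) (hαt : α ≤ t) :
    α * phi t ≤ t * phi α := by
  rcases eq_or_lt_of_le hαt with rfl | hlt
  · exact le_of_eq (by ring)
  · have hkey : ∀ s ∈ Set.Ioo (0:ℝ) α, (α - s) / (t - s) * phi t ≤ phi α := by
      intro s hs
      have hs0 : 0 < s := hs.1
      have hsα : s < α := hs.2
      have hst : s < t := hsα.trans hlt
      have hμ0 : 0 ≤ (α - s) / (t - s) := by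
        apply div_nonneg <;> linarith
      have hν0 : 0 ≤ (t - α) / (t - s) := by
        apply div_nonneg <;> linarith
      have hsum : (α - s) / (t - s) + (t - α) / (t - s) = 1 := by
        rw [← add_div, show α - s + (t - α) = t - s by ring,
          div_self (by linarith : t - s ≠ 0)]
      have hcomb := hconc.2 ht ⟨hs0, le_trans hs.2.le (le_trans hαt ht.2)⟩ hμ0 hν0 hsum
      simp only [smul_eq_mul] at hcomb
      have hpt : (α - s) / (t - s) * t + (t - α) / (t - s) * s = α := by
        rw [div_mul_eq_mul_div, div_mul_eq_mul_div, ← add_div,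
          show (α - s) * t + (t - α) * s = α * (t - s) by ring,
          mul_div_assoc, div_self (by linarith : t - s ≠ 0), mul_one]
      rw [hpt] at hcomb
      have hφs : 0 < phi s := hpos s ⟨hs0, le_trans hsα.le (le_trans hαt ht.2)⟩
      have : (t - α) / (t - s) * phi s ≥ 0 := mul_nonneg hν0 hφs.le
      linarith
    have htend : Filter.Tendsto (fun s : ℝ => (α - s) / (t - s) * phi t)
        (nhdsWithin 0 (Set.Ioo 0 α)) (nhds (α / t * phi t)) := by
      apply Filter.Tendsto.mono_left ?_ (nhdsWithin_le_nhds)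
      have : ContinuousAt (fun s : ℝ => (α - s) / (t - s) * phi t) 0 := by
        have hne : t - (0:ℝ) ≠ 0 := by simp; linarith [ht.1]
        fun_prop (disch := exact hne)
      simpa using this.tendsto
    have hne : (nhdsWithin (0:ℝ) (Set.Ioo 0 α)).NeBot :=
      left_nhdsWithin_Ioo_neBot hα.1
    have hle : α / t * phi t ≤ phi α :=
      le_of_tendsto htend (Filter.eventually_of_mem self_mem_nhdsWithin hkey)
    rw [div_mul_eq_mul_div, div_le_iff₀ (by linarith [ht.1])] at hle
    linarith [hle]

lemma phi_contIcc {a : ℝ} {phi : ℝ → ℝ}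
    (hcont : ContinuousOn phi (Set.Ioc 0 a))
    (hlim : Filter.Tendsto phi (nhdsWithin 0 (Set.Ioi 0)) (nhds 0))
    (hphi0 : phi 0 = 0) :
    ContinuousOn phi (Set.Icc 0 a) := by
  intro t ht
  rcases eq_or_lt_of_le ht.1 with h0 | h0
  · subst h0
    rw [ContinuousWithinAt]
    have hsub : Set.Icc (0:ℝ) a ⊆ {0} ∪ Set.Ioi 0 := by
      intro x hx
      rcases eq_or_lt_of_le hx.1 with h | h
      · exact Or.inl (by simp [← h])
      · exact Or.inr h
    apply Filter.Tendsto.mono_left ?_ (nhdsWithin_mono _ hsub)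
    rw [nhdsWithin_union, nhdsWithin_singleton, Filter.tendsto_sup]
    constructor
    · simpa [hphi0] using tendsto_pure_nhds phi 0
    · rw [hphi0]; exact hlim
  · have h1 : ContinuousWithinAt phi (Set.Ioc 0 a) t := hcont t ⟨h0, ht.2⟩
    apply h1.mono_of_mem_nhdsWithin
    have : Set.Ioc 0 a = Set.Icc 0 a ∩ Set.Ioi 0 := by
      ext x; simp only [Set.mem_Ioc, Set.mem_Icc, Set.mem_Ioi, Set.mem_inter_iff]
      constructor
      · rintro ⟨h1, h2⟩; exact ⟨⟨h1.le, h2⟩, h1⟩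
      · rintro ⟨⟨_, h2⟩, h3⟩; exact ⟨h3, h2⟩
    rw [this]
    exact inter_mem_nhdsWithin _ (Ioi_mem_nhds h0)

end AuxReal

section AuxOp

open scoped InnerProductSpace

variable {X Y : Type*} [NormedAddCommGroup X] [InnerProductSpace ℂ X]
    [CompleteSpace X] [NormedAddCommGroup Y] [InnerProductSpace ℂ Y] [CompleteSpace Y]

lemma cfc_comp_adjoint_bound (T : X →L[ℂ] Y) (g : ℝ → ℝ) (s : ℝ) (hs : 0 ≤ s)
    (hgc : ContinuousOn g (spectrum ℝ ((adjoint T) ∘L T)))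
    (hbound : ∀ t ∈ spectrum ℝ ((adjoint T) ∘L T), |g t * (t * g t)| ≤ s ^ 2)
    (v : Y) : ‖cfc g ((adjoint T) ∘L T) (adjoint T v)‖ ≤ s * ‖v‖ := by
  set A := (adjoint T) ∘L T with hAdef
  have hA : IsSelfAdjoint A := by
    rw [isSelfAdjoint_iff', hAdef, adjoint_comp, adjoint_adjoint]
  set G := cfc g A with hGdef
  have hGsa : IsSelfAdjoint G := cfc_predicate g A
  have hmul : cfc (fun t => g t * (t * g t)) A = G * (A * G) := by
    rw [cfc_mul g (fun t => t * g t) A hgc (ContinuousOn.mul (continuousOn_id' _) hgc)]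
    rw [cfc_mul (fun t => t) g A (continuousOn_id' _) hgc, cfc_id' ℝ A]
  have hGAG : ‖G * (A * G)‖ ≤ s ^ 2 := by
    rw [← hmul]
    exact norm_cfc_le (by positivity) hbound
  have hTG : ∀ x : X, ‖T (G x)‖ ≤ s * ‖x‖ := by
    intro x
    have h1 : ‖T (G x)‖ ^ 2 = RCLike.re ⟪T (G x), T (G x)⟫_ℂ := by
      rw [inner_self_eq_norm_sq]
    have h2 : ⟪T (G x), T (G x)⟫_ℂ = ⟪(G * (A * G)) x, x⟫_ℂ := by
      calc ⟪T (G x), T (G x)⟫_ℂ = ⟪adjoint T (T (G x)), G x⟫_ℂ :=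
            (adjoint_inner_left T (G x) (T (G x))).symm
      _ = ⟪A (G x), G x⟫_ℂ := rfl
      _ = ⟪adjoint G (A (G x)), x⟫_ℂ := (adjoint_inner_left G x (A (G x))).symm
      _ = ⟪(G * (A * G)) x, x⟫_ℂ := by
            rw [isSelfAdjoint_iff'.mp hGsa]
            simp [mul_apply]
    have h3 : RCLike.re ⟪(G * (A * G)) x, x⟫_ℂ ≤ s ^ 2 * ‖x‖ ^ 2 := by
      calc RCLike.re ⟪(G * (A * G)) x, x⟫_ℂ ≤ ‖⟪(G * (A * G)) x, x⟫_ℂ‖ :=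
            RCLike.re_le_norm _
      _ ≤ ‖(G * (A * G)) x‖ * ‖x‖ := norm_inner_le_norm _ _
      _ ≤ (s ^ 2 * ‖x‖) * ‖x‖ := by
            apply mul_le_mul_of_nonneg_right ?_ (norm_nonneg x)
            calc ‖(G * (A * G)) x‖ ≤ ‖G * (A * G)‖ * ‖x‖ := le_opNorm _ x
            _ ≤ s ^ 2 * ‖x‖ := mul_le_mul_of_nonneg_right hGAG (norm_nonneg x)
      _ = s ^ 2 * ‖x‖ ^ 2 := by ring
    have h4 : ‖T (G x)‖ ^ 2 ≤ (s * ‖x‖) ^ 2 := by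
      rw [h1]
      calc _ ≤ s ^ 2 * ‖x‖ ^ 2 := by rw [h2]; exact h3
      _ = (s * ‖x‖) ^ 2 := by ring
    calc ‖T (G x)‖ = Real.sqrt (‖T (G x)‖ ^ 2) := (Real.sqrt_sq (norm_nonneg _)).symm
    _ ≤ Real.sqrt ((s * ‖x‖) ^ 2) := Real.sqrt_le_sqrt h4
    _ = s * ‖x‖ := Real.sqrt_sq (by positivity)
  have hTGnorm : ‖T ∘L G‖ ≤ s := opNorm_le_bound _ hs (fun x => hTG x)
  have hadj : adjoint (T ∘L G) = G ∘L adjoint T := by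
    rw [adjoint_comp, isSelfAdjoint_iff'.mp hGsa]
  calc ‖G (adjoint T v)‖ = ‖(G ∘L adjoint T) v‖ := rfl
  _ ≤ ‖G ∘L adjoint T‖ * ‖v‖ := le_opNorm _ v
  _ = ‖T ∘L G‖ * ‖v‖ := by
      rw [← hadj,
        LinearIsometryEquiv.norm_map (adjoint : (X →L[ℂ] Y) ≃ₗᵢ⋆[ℂ] (Y →L[ℂ] X)) (T ∘L G)]
  _ ≤ s * ‖v‖ := mul_le_mul_of_nonneg_right hTGnorm (norm_nonneg v)

end AuxOp

set_option maxHeartbeats 1000000 in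
/-- Let `0 < a ≤ e⁻¹`, let `φ : (0,a] → (0,∞)` be a concave index function
(continuous, monotonically increasing, `φ(λ) → 0` as `λ → 0⁺`, extended by `φ(0)=0`),
`ρ > 0`, and let `T` be a bounded injective operator between complex Hilbert spaces
with `‖T*T‖ ≤ a`. Let `x† = φ(T*T)w` with `‖w‖ ≤ ρ`. For `ε ∈ (0,1/2)` define
`Θ_ε(λ) = λ^{1/2−ε}·φ(λ)` and `Θ(λ) = √λ·φ(λ)`. Then there exist `C > 0` and
`δ̄ > 0` such that for every `δ ∈ (0, min(δ̄, Θ(a))]`, every `y^δ` with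
`‖y^δ − T x†‖ ≤ δ`, and every `α ∈ (0,a]` with `Θ_ε(α) = δ`, the regularized
solution `x(δ) = g_α(T*T)T*y^δ` satisfies `‖x† − x(δ)‖ ≤ C · α^{−ε} · φ(α)`. -/
theorem stmt14 {X Y : Type*} [NormedAddCommGroup X] [InnerProductSpace ℂ X]
    [CompleteSpace X] [NormedAddCommGroup Y] [InnerProductSpace ℂ Y] [CompleteSpace Y]
    (T : X →L[ℂ] Y) (hTinj : Function.Injective T)
    (a : ℝ) (ha0 : 0 < a) (ha1 : a ≤ Real.exp (-1))
    (hTnorm : ‖(adjoint T) ∘L T‖ ≤ a)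
    (phi : ℝ → ℝ)
    (hcont : ContinuousOn phi (Set.Ioc 0 a))
    (hmono : MonotoneOn phi (Set.Ioc 0 a))
    (hconc : ConcaveOn ℝ (Set.Ioc 0 a) phi)
    (hpos : ∀ lam ∈ Set.Ioc (0 : ℝ) a, 0 < phi lam)
    (hlim : Filter.Tendsto phi (nhdsWithin 0 (Set.Ioi 0)) (nhds 0))
    (hphi0 : phi 0 = 0)
    (ρ : ℝ) (hρ : 0 < ρ)
    (w : X) (hw : ‖w‖ ≤ ρ) (xdag : X) (hxdag : xdag = cfc phi ((adjoint T) ∘L T) w) :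
    ∀ ε ∈ Set.Ioo (0 : ℝ) (1 / 2), ∃ C > (0 : ℝ), ∃ δbar > (0 : ℝ),
      ∀ δ : ℝ, 0 < δ → δ ≤ min δbar (Real.sqrt a * phi a) → ∀ yδ : Y,
        ‖yδ - T xdag‖ ≤ δ → ∀ α ∈ Set.Ioc (0 : ℝ) a,
          α ^ ((1 : ℝ) / 2 - ε) * phi α = δ →
          ‖xdag - cfc (genFun α) ((adjoint T) ∘L T) ((adjoint T) yδ)‖ ≤
            C * α ^ (-ε) * phi α := by
  intro ε hε
  obtain ⟨hε0, hε2⟩ := hε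
  refine ⟨ρ * (1 + 4 / ε ^ 2) + 2, by positivity, 1, one_pos, ?_⟩
  intro δ hδ0 hδle yδ hyδ α hαmem hΘ
  obtain ⟨hα0, hαa⟩ := hαmem
  have hφα : 0 < phi α := hpos α ⟨hα0, hαa⟩
  rcases subsingleton_or_nontrivial X with hX | hX
  · have h0 : xdag - cfc (genFun α) (adjoint T ∘L T) (adjoint T yδ) = 0 :=
      Subsingleton.elim _ _
    rw [h0, norm_zero]
    have h1 : 0 ≤ α ^ (-ε) := Real.rpow_nonneg hα0.le _
    positivity
  set A := (adjoint T) ∘L T with hAdef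
  have hA : IsSelfAdjoint A := by
    rw [isSelfAdjoint_iff', hAdef, adjoint_comp, adjoint_adjoint]
  have hAnonneg : (0 : X →L[ℂ] X) ≤ A := by
    rw [hAdef, nonneg_iff_isPositive]
    exact isPositive_adjoint_comp_self T
  have hspec : spectrum ℝ A ⊆ Set.Icc 0 a := by
    intro t ht
    refine ⟨spectrum_nonneg_of_nonneg hAnonneg ht, ?_⟩
    calc t ≤ |t| := le_abs_self t
    _ ≤ ‖A‖ := spectrum.norm_le_norm_of_mem ht
    _ ≤ a := hTnorm
  have he1 : Real.exp (-1) ≤ 1 := by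
    rw [Real.exp_le_one_iff]; norm_num
  have hα1 : α ≤ 1 := le_trans hαa (le_trans ha1 he1)
  have hIcc_Ici : Set.Icc (0:ℝ) a ⊆ Set.Ici 0 := fun x hx => hx.1
  have hgc : ContinuousOn (genFun α) (spectrum ℝ A) :=
    (genFun_continuousOn hα0).mono (hspec.trans hIcc_Ici)
  have hφc : ContinuousOn phi (spectrum ℝ A) :=
    (phi_contIcc hcont hlim hphi0).mono hspec
  have hrc : ContinuousOn (fun t => 1 - genFun α t * t) (spectrum ℝ A) :=
    continuousOn_const.sub (hgc.mul (continuousOn_id' _))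
  set G := cfc (genFun α) A with hGdef
  -- key algebraic identity
  have hxsplit : xdag - G (adjoint T yδ)
      = cfc (fun t => (1 - genFun α t * t) * phi t) A w
        + G (adjoint T (T xdag - yδ)) := by
    have e2 : cfc (fun t : ℝ => genFun α t * t) A = G * A := by
      rw [cfc_mul _ _ A hgc (continuousOn_id' _), cfc_id' ℝ A]
    have e3 : cfc (fun t : ℝ => 1 - genFun α t * t) A = 1 - G * A := by
      rw [cfc_sub (fun _ => 1) (fun t => genFun α t * t) A continuousOn_const (hgc.mul (continuousOn_id' _)), e2,
        cfc_const_one ℝ A]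
    have e1 : cfc (fun t : ℝ => (1 - genFun α t * t) * phi t) A w
        = xdag - G (A xdag) := by
      rw [cfc_mul _ _ A hrc hφc, e3, hxdag]
      simp [mul_apply, sub_apply, one_apply]
    rw [e1, map_sub (adjoint T), map_sub G]
    have h5 : adjoint T (T xdag) = A xdag := rfl
    rw [h5]
    abel
  rw [hxsplit]
  have hαε0 : 0 ≤ α ^ (-ε) := Real.rpow_nonneg hα0.le _
  -- bound for the approximation term
  have hbound1 : ‖cfc (fun t => (1 - genFun α t * t) * phi t) A w‖
      ≤ ((1 + 4 / ε ^ 2) * α ^ (-ε) * phi α) * ρ := by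
    have hK0 : 0 ≤ (1 + 4 / ε ^ 2) * α ^ (-ε) * phi α := by positivity
    have hpt : ∀ t ∈ spectrum ℝ A,
        |(1 - genFun α t * t) * phi t| ≤ (1 + 4 / ε ^ 2) * α ^ (-ε) * phi α := by
      intro t ht
      obtain ⟨ht0, hta⟩ := hspec ht
      rcases eq_or_lt_of_le ht0 with h0 | h0
      · rw [← h0]
        simp only [hphi0, mul_zero, abs_zero]
        exact hK0
      · have hφt : 0 < phi t := hpos t ⟨h0, hta⟩
        have hr := resid_mem α t ht0
        rw [abs_of_nonneg (mul_nonneg hr.1 hφt.le)]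
        have hαε1 : 1 ≤ α ^ (-ε) :=
          Real.one_le_rpow_of_pos_of_le_one_of_nonpos hα0 hα1 (by linarith)
        rcases le_or_gt t α with hcase | hcase
        · calc (1 - genFun α t * t) * phi t ≤ 1 * phi t :=
                mul_le_mul_of_nonneg_right hr.2 hφt.le
          _ = phi t := one_mul _
          _ ≤ phi α := hmono ⟨h0, hta⟩ ⟨hα0, hαa⟩ hcase
          _ ≤ (1 + 4 / ε ^ 2) * α ^ (-ε) * phi α := by
                have h40 : (0:ℝ) ≤ 4 / ε ^ 2 := by positivity
                have hq : 1 * 1 ≤ (1 + 4 / ε ^ 2) * α ^ (-ε) :=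
                  mul_le_mul (by linarith) hαε1 zero_le_one (by linarith)
                have h41 : 0 ≤ ((1 + 4 / ε ^ 2) * α ^ (-ε) - 1) * phi α :=
                  mul_nonneg (by linarith) hφα.le
                nlinarith [h41]
        · have h5 := resid_le α t hα0 hcase (le_trans hta ha1)
          have h6 := concave_ratio ha0 hconc hpos ⟨hα0, hαa⟩ ⟨h0, hta⟩ hcase.le
          have h7 := aux_logsq ε α hε0 hα0 (le_trans hαa ha1)
          have hlog0 : 0 ≤ (Real.log α) ^ 2 := sq_nonneg _
          calc (1 - genFun α t * t) * phi t
              ≤ (α * (Real.log α) ^ 2 / t) * phi t :=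
                mul_le_mul_of_nonneg_right h5 hφt.le
          _ = (Real.log α) ^ 2 * (α * phi t / t) := by ring
          _ ≤ (Real.log α) ^ 2 * phi α := by
                apply mul_le_mul_of_nonneg_left ?_ hlog0
                rw [div_le_iff₀ h0]
                linarith [h6]
          _ ≤ (4 / ε ^ 2 * α ^ (-ε)) * phi α :=
                mul_le_mul_of_nonneg_right h7 hφα.le
          _ ≤ (1 + 4 / ε ^ 2) * α ^ (-ε) * phi α := by
                have h42 : 0 ≤ α ^ (-ε) * phi α := mul_nonneg hαε0 hφα.le
                nlinarith [h42]
    calc ‖cfc (fun t => (1 - genFun α t * t) * phi t) A w‖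
        ≤ ‖cfc (fun t => (1 - genFun α t * t) * phi t) A‖ * ‖w‖ := le_opNorm _ w
    _ ≤ ((1 + 4 / ε ^ 2) * α ^ (-ε) * phi α) * ρ :=
        mul_le_mul (norm_cfc_le hK0 hpt) hw (norm_nonneg w) hK0
  -- bound for the data term
  have hbound2 : ‖G (adjoint T (T xdag - yδ))‖ ≤ 2 * α ^ (-ε) * phi α := by
    have hs : (0:ℝ) ≤ 2 * α ^ (-(1/2) : ℝ) := by positivity
    have hsq : (2 * α ^ (-(1/2) : ℝ)) ^ 2 = 4 / α := by
      rw [mul_pow, ← Real.rpow_natCast (α ^ (-(1/2):ℝ)) 2, ← Real.rpow_mul hα0.le]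
      norm_num
      rw [Real.rpow_neg_one]
      ring
    have hpt2 : ∀ t ∈ spectrum ℝ A,
        |genFun α t * (t * genFun α t)| ≤ (2 * α ^ (-(1/2) : ℝ)) ^ 2 := by
      rw [hsq]
      intro t ht
      obtain ⟨ht0, hta⟩ := hspec ht
      rcases eq_or_lt_of_le ht0 with h0 | h0
      · rw [← h0]
        simp only [mul_zero, zero_mul, abs_zero]
        positivity
      · rw [abs_of_nonneg (mul_nonneg (genFun_nonneg ht0)
          (mul_nonneg ht0 (genFun_nonneg ht0)))]
        exact genFun_bound2 α t hα0 hα1 h0 (le_trans hta ha1)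
    have hb := cfc_comp_adjoint_bound T (genFun α) (2 * α ^ (-(1/2) : ℝ)) hs hgc hpt2
      (T xdag - yδ)
    have hvle : ‖T xdag - yδ‖ ≤ δ := by rw [norm_sub_rev]; exact hyδ
    calc ‖G (adjoint T (T xdag - yδ))‖ ≤ (2 * α ^ (-(1/2) : ℝ)) * ‖T xdag - yδ‖ := hb
    _ ≤ (2 * α ^ (-(1/2) : ℝ)) * δ := mul_le_mul_of_nonneg_left hvle hs
    _ = 2 * α ^ (-(1/2) : ℝ) * (α ^ ((1:ℝ)/2 - ε) * phi α) := by rw [hΘ]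
    _ = 2 * (α ^ (-(1/2) : ℝ) * α ^ ((1:ℝ)/2 - ε)) * phi α := by ring
    _ = 2 * α ^ (-ε) * phi α := by
        rw [← Real.rpow_add hα0, show -(1/2:ℝ) + (1/2 - ε) = -ε by ring]
  calc ‖cfc (fun t => (1 - genFun α t * t) * phi t) A w + G (adjoint T (T xdag - yδ))‖
      ≤ ‖cfc (fun t => (1 - genFun α t * t) * phi t) A w‖
        + ‖G (adjoint T (T xdag - yδ))‖ := norm_add_le _ _
  _ ≤ ((1 + 4 / ε ^ 2) * α ^ (-ε) * phi α) * ρ + 2 * α ^ (-ε) * phi α :=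
      add_le_add hbound1 hbound2
  _ = (ρ * (1 + 4 / ε ^ 2) + 2) * α ^ (-ε) * phi α := by ring
end

section
/- Let 0 < μ, ρ > 0, ‖T*T‖ ≤ e^{−1}, and let x† = (T*T)^μ w with ‖w‖ ≤ ρ (Hölder source condition). If μ ≤ 1, then for every σ with 0 < σ < μ there exist a function α : (0,∞) → (0,∞), a constant C > 0 and δ̄ > 0 such that for every δ ∈ (0,δ̄] and every y^δ ∈ Y with ‖y^δ − T x†‖ ≤ δ, the regularized solution x^δ_{α(δ)} = g_{α(δ)}(T*T)T*y^δ satisfies ‖x† − x^δ_{α(δ)}‖ ≤ C·δ^{2σ/(2σ+1)}. If μ > 1, there exist such α, C, δ̄ with ‖x† − x^δ_{α(δ)}‖ ≤ C·δ^{2/3}. -/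
open ContinuousLinearMap

section Aux


lemma one_sub_exp_neg_le {x : ℝ} : 1 - Real.exp (-x) ≤ x := by
  nlinarith [Real.add_one_le_exp (-x)]

lemma div_e_le_one_sub_exp_neg {x : ℝ} (h0 : 0 ≤ x) (h1 : x ≤ 1) :
    x / Real.exp 1 ≤ 1 - Real.exp (-x) := by
  have hE : Real.exp (-x) * Real.exp x = 1 := by rw [← Real.exp_add]; simp
  have h2 : x * Real.exp (-x) ≤ 1 - Real.exp (-x) := by
    nlinarith [Real.add_one_le_exp x, Real.exp_pos (-x)]
  have h3 : Real.exp (-1) ≤ Real.exp (-x) := Real.exp_le_exp.mpr (by linarith)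
  have := Real.exp_pos 1
  calc x / Real.exp 1 = x * Real.exp (-1) := by rw [Real.exp_neg]; ring
    _ ≤ x * Real.exp (-x) := by nlinarith
    _ ≤ _ := h2

lemma log_le_div_e {y : ℝ} (hy : 0 < y) : Real.log y ≤ y / Real.exp 1 := by
  have := Real.add_one_le_exp (Real.log y - 1)
  rw [Real.exp_sub, Real.exp_log hy] at this
  linarith

lemma rpow_mul_log_le {x a b : ℝ} (hx0 : 0 < x) (hx1 : x ≤ 1) (ha : 0 < a) (hb : 0 < b) :
    x ^ a * Real.log (1/x) ^ b ≤ (b / (a * Real.exp 1)) ^ b := by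
  have he := Real.exp_pos 1
  have hL : 0 ≤ Real.log (1/x) := Real.log_nonneg (by rw [le_div_iff₀ hx0]; linarith)
  have hc : 0 < a / b := div_pos ha hb
  have hxi : (0:ℝ) < 1/x := by positivity
  have hxc : (0:ℝ) < (1/x) ^ (a/b) := Real.rpow_pos_of_pos hxi _
  have key : Real.log (1/x) ≤ (1/x) ^ (a/b) / (a/b * Real.exp 1) := by
    have h1 : Real.log ((1/x) ^ (a/b)) ≤ (1/x)^(a/b) / Real.exp 1 := log_le_div_e hxc
    rw [Real.log_rpow hxi] at h1
    rw [le_div_iff₀ (by positivity : 0 < a/b * Real.exp 1)]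
    have h2 := mul_le_mul_of_nonneg_right h1 he.le
    rw [div_mul_cancel₀ _ he.ne'] at h2
    nlinarith [h2]
  have hpow : Real.log (1/x) ^ b ≤ ((1/x) ^ (a/b) / (a/b * Real.exp 1)) ^ b :=
    Real.rpow_le_rpow hL key hb.le
  have e1 : ((1/x) ^ (a/b) / (a/b * Real.exp 1)) ^ b
      = (1/x) ^ a * (b / (a * Real.exp 1)) ^ b := by
    rw [Real.div_rpow hxc.le (by positivity), ← Real.rpow_mul hxi.le,
      div_mul_cancel₀ _ hb.ne']
    rw [div_eq_mul_inv ((1/x)^a), ← Real.inv_rpow (by positivity)]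
    congr 2
    field_simp
  have h2 : x ^ a * Real.log (1/x) ^ b ≤ x ^ a * ((1/x) ^ a * (b / (a * Real.exp 1)) ^ b) := by
    have : (0:ℝ) ≤ x ^ a := (Real.rpow_pos_of_pos hx0 a).le
    exact mul_le_mul_of_nonneg_left (e1 ▸ hpow) this
  calc x ^ a * Real.log (1/x) ^ b ≤ x ^ a * (1/x) ^ a * (b / (a * Real.exp 1)) ^ b := by
        rw [mul_assoc]; exact h2
    _ = (b / (a * Real.exp 1)) ^ b := by
        rw [← Real.mul_rpow hx0.le hxi.le, mul_one_div_cancel hx0.ne', Real.one_rpow, one_mul]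



lemma rpow_continuousOn {μ : ℝ} (hμ : 0 < μ) : ContinuousOn (fun t : ℝ => t ^ μ) (Set.Ici 0) :=
  fun t _ => (Real.continuousAt_rpow_const t μ (Or.inr hμ.le)).continuousWithinAt

-- min(1,y) ≤ y^θ
lemma min_one_le_rpow {y θ : ℝ} (hy : 0 ≤ y) (h0 : 0 ≤ θ) (h1 : θ ≤ 1) :
    min 1 y ≤ y ^ θ := by
  rcases eq_or_lt_of_le hy with rfl | hy0
  · rcases eq_or_lt_of_le h0 with rfl | h0'
    · simp
    · rw [Real.zero_rpow h0'.ne']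
      simp
  rcases le_total 1 y with h | h
  · exact (min_le_left _ _).trans (Real.one_le_rpow h h0)
  · calc min 1 y ≤ y := min_le_right _ _
      _ = y ^ (1:ℝ) := (Real.rpow_one y).symm
      _ ≤ y ^ θ := Real.rpow_le_rpow_of_exponent_ge hy0 h h1

-- noise bound: λ·g(λ)² ≤ e²/(4α), for λ ∈ [0, e⁻¹], 0 < α ≤ 1
lemma noise_ptwise {lam α : ℝ} (hα0 : 0 < α) (hα1 : α ≤ 1) (h0 : 0 ≤ lam)
    (h1 : lam ≤ Real.exp (-1)) :
    genFun α lam * lam * genFun α lam ≤ Real.exp 1 ^ 2 / (4 * α) := by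
  rcases eq_or_lt_of_le h0 with h | hpos
  · simp [genFun, ← h]; positivity
  have hne := hpos.ne'
  have hsq0 : 0 < Real.sqrt α := Real.sqrt_pos.mpr hα0
  have hsq1 : Real.sqrt α ≤ 1 := by
    rw [show (1:ℝ) = Real.sqrt 1 by simp]; exact Real.sqrt_le_sqrt hα1
  have hL : 1 ≤ -Real.log lam := by
    rw [le_neg]
    calc Real.log lam ≤ Real.log (Real.exp (-1)) := Real.log_le_log hpos h1
      _ = -1 := Real.log_exp _
  set b := (1 - Real.exp (Real.sqrt α * Real.log lam)) ^ 2 with hb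
  have hexple : Real.exp (Real.sqrt α * Real.log lam) ≤ Real.exp (-Real.sqrt α) := by
    apply Real.exp_le_exp.mpr
    nlinarith
  have hkey : Real.sqrt α / Real.exp 1 ≤ 1 - Real.exp (Real.sqrt α * Real.log lam) := by
    calc Real.sqrt α / Real.exp 1 ≤ 1 - Real.exp (-Real.sqrt α) :=
          div_e_le_one_sub_exp_neg hsq0.le hsq1
      _ ≤ _ := by linarith
  have hbpos : α / Real.exp 1 ^ 2 ≤ b := by
    rw [hb]
    calc α / Real.exp 1 ^ 2 = (Real.sqrt α / Real.exp 1)^2 := by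
          rw [div_pow, Real.sq_sqrt hα0.le]
      _ ≤ _ := by
          apply sq_le_sq'
          · have : (0:ℝ) < Real.sqrt α / Real.exp 1 := by positivity
            nlinarith
          · exact hkey
  have hb0 : 0 < b := lt_of_lt_of_le (by positivity) hbpos
  have hg : genFun α lam = 1 / (lam + b) := by simp [genFun, hne, hb]
  have hden : 0 < lam + b := by positivity
  rw [hg]
  have hAM : lam * 1 ≤ (lam + b)^2 / (4 * b) := by
    rw [le_div_iff₀ (by positivity)]
    nlinarith [sq_nonneg (lam - b)]
  calc 1 / (lam + b) * lam * (1 / (lam + b)) = lam / (lam + b)^2 := by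
        rw [eq_div_iff (by positivity : ((lam+b)^2:ℝ) ≠ 0)]
        field_simp [hden.ne']
    _ ≤ 1 / (4 * b) := by
        rw [div_le_div_iff₀ (by positivity) (by positivity)]
        nlinarith [sq_nonneg (lam - b)]
    _ ≤ Real.exp 1 ^ 2 / (4 * α) := by
        rw [div_le_div_iff₀ (by positivity) (by positivity)]
        have := Real.exp_pos 1
        calc 1 * (4 * α) = 4 * (α / Real.exp 1 ^2) * Real.exp 1 ^2 := by field_simp
          _ ≤ 4 * b * Real.exp 1 ^ 2 := by nlinarith
          _ = Real.exp 1 ^2 * (4 * b) := by ring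

lemma bias_ptwise {lam α μ θ : ℝ} (hα0 : 0 < α) (hα1 : α ≤ 1) (hμ : 0 < μ)
    (hθ0 : 0 < θ) (hθ1 : θ ≤ 1) (hθμ : θ < μ) (h0 : 0 ≤ lam) (h1 : lam ≤ Real.exp (-1)) :
    |(1 - lam * genFun α lam) * lam ^ μ| ≤
      (2*θ / ((μ - θ) * Real.exp 1)) ^ (2*θ) * α ^ θ := by
  have hμθ : 0 < μ - θ := sub_pos.mpr hθμ
  have hK : (0:ℝ) ≤ (2*θ / ((μ - θ) * Real.exp 1)) ^ (2*θ) :=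
    Real.rpow_nonneg (by positivity) _
  have hαθ : (0:ℝ) ≤ α ^ θ := by positivity
  rcases eq_or_lt_of_le h0 with h | hpos
  · rw [← h, Real.zero_rpow hμ.ne', mul_zero, abs_zero]
    positivity
  have hne := hpos.ne'
  have hsq0 : 0 < Real.sqrt α := Real.sqrt_pos.mpr hα0
  set L : ℝ := -Real.log lam with hLdef
  have hL : 1 ≤ L := by
    rw [hLdef, le_neg]
    calc Real.log lam ≤ Real.log (Real.exp (-1)) := Real.log_le_log hpos h1
      _ = -1 := Real.log_exp _
  have hL0 : 0 < L := lt_of_lt_of_le one_pos hL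
  set b := (1 - Real.exp (Real.sqrt α * Real.log lam)) ^ 2 with hb
  have hbnn : 0 ≤ b := sq_nonneg _
  have hexp : Real.exp (Real.sqrt α * Real.log lam) = Real.exp (-(Real.sqrt α * L)) := by
    rw [hLdef]; ring_nf
  have hble : b ≤ α * L^2 := by
    rw [hb, hexp]
    have h1' : 1 - Real.exp (-(Real.sqrt α * L)) ≤ Real.sqrt α * L := one_sub_exp_neg_le
    have h2' : 0 ≤ 1 - Real.exp (-(Real.sqrt α * L)) := by
      have : Real.exp (-(Real.sqrt α * L)) ≤ 1 :=
        Real.exp_le_one_iff.mpr (neg_nonpos.mpr (by positivity))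
      linarith
    calc (1 - Real.exp (-(Real.sqrt α * L)))^2 ≤ (Real.sqrt α * L)^2 := by nlinarith
      _ = α * L^2 := by rw [mul_pow, Real.sq_sqrt hα0.le]
  have hg : genFun α lam = 1 / (lam + b) := by simp [genFun, hne, hb]
  have hden : 0 < lam + b := by positivity
  have hr : 1 - lam * genFun α lam = b / (lam + b) := by
    rw [hg]; field_simp; ring
  have hr0 : 0 ≤ b / (lam + b) := by positivity
  have hr1 : b / (lam + b) ≤ 1 := by rw [div_le_one hden]; linarith
  have hrb : b / (lam + b) ≤ b / lam := by
    gcongr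
    linarith
  have hmin : b / (lam + b) ≤ (b/lam) ^ θ :=
    (le_min hr1 hrb).trans (min_one_le_rpow (by positivity) hθ0.le hθ1)
  have hlam1 : lam ≤ 1 := h1.trans (Real.exp_le_one_iff.mpr (by norm_num))
  have hstep : (b/lam) ^ θ ≤ (α * L^2 / lam) ^ θ :=
    Real.rpow_le_rpow (by positivity) (by gcongr) hθ0.le
  have hsplit : (α * L^2 / lam) ^ θ * lam ^ μ = α ^ θ * (lam ^ (μ - θ) * L ^ (2*θ)) := by
    rw [Real.div_rpow (by positivity) h0, Real.mul_rpow hα0.le (by positivity),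
      Real.rpow_sub hpos]
    have h2 : (L^2) ^ θ = L ^ (2*θ) := by
      rw [← Real.rpow_natCast L 2, ← Real.rpow_mul hL0.le]
      norm_num
    rw [h2]
    ring
  have hfin : lam ^ (μ - θ) * L ^ (2*θ) ≤ (2*θ / ((μ - θ) * Real.exp 1)) ^ (2*θ) := by
    have := rpow_mul_log_le (x := lam) (a := μ - θ) (b := 2*θ) hpos hlam1 hμθ (by linarith)
    rwa [one_div, Real.log_inv] at this
  have hnn : 0 ≤ (1 - lam * genFun α lam) * lam ^ μ := by
    rw [hr]; positivity
  rw [abs_of_nonneg hnn, hr]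
  calc b / (lam + b) * lam ^ μ ≤ (α * L^2 / lam) ^ θ * lam ^ μ := by
        apply mul_le_mul_of_nonneg_right (hmin.trans hstep) (by positivity)
    _ = α ^ θ * (lam ^ (μ - θ) * L ^ (2*θ)) := hsplit
    _ ≤ α ^ θ * (2*θ / ((μ - θ) * Real.exp 1)) ^ (2*θ) := by
        apply mul_le_mul_of_nonneg_left hfin (by positivity)
    _ = _ := mul_comm _ _

set_option maxHeartbeats 2000000 in
theorem master {X Y : Type*} [NormedAddCommGroup X] [InnerProductSpace ℂ X]
    [CompleteSpace X] [NormedAddCommGroup Y] [InnerProductSpace ℂ Y] [CompleteSpace Y]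
    (T : X →L[ℂ] Y) (hTnorm : ‖(adjoint T) ∘L T‖ ≤ Real.exp (-1))
    {μ ρ : ℝ} (hμ : 0 < μ) (hρ : 0 < ρ) {w : X} (hw : ‖w‖ ≤ ρ) {xdag : X}
    (hxdag : xdag = cfc (fun t : ℝ => t ^ μ) ((adjoint T) ∘L T) w)
    {θ : ℝ} (hθ0 : 0 < θ) (hθ1 : θ ≤ 1) (hθμ : θ < μ)
    {δ : ℝ} (hδ0 : 0 < δ) (hδ1 : δ ≤ 1) {yδ : Y} (hyδ : ‖yδ - T xdag‖ ≤ δ) :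
    ‖xdag - cfc (genFun (δ ^ (2/(2*θ+1)))) ((adjoint T) ∘L T) ((adjoint T) yδ)‖ ≤
      ((2*θ/((μ-θ)*Real.exp 1))^(2*θ) * ρ + Real.exp 1 / 2) * δ ^ (2*θ/(2*θ+1)) := by
  have hμθ : 0 < μ - θ := sub_pos.mpr hθμ
  have hKpos : (0:ℝ) < (2*θ/((μ-θ)*Real.exp 1))^(2*θ) :=
    Real.rpow_pos_of_pos (by positivity) _
  have hδE : (0:ℝ) < δ ^ (2*θ/(2*θ+1)) := Real.rpow_pos_of_pos hδ0 _
  set α : ℝ := δ ^ (2/(2*θ+1)) with hαdef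
  have hα0 : 0 < α := Real.rpow_pos_of_pos hδ0 _
  have hα1 : α ≤ 1 := Real.rpow_le_one hδ0.le hδ1 (by positivity)
  rcases subsingleton_or_nontrivial X with hX | hX
  · rw [Subsingleton.elim (xdag - _) (0 : X), norm_zero]
    positivity
  set A : X →L[ℂ] X := (adjoint T) ∘L T with hAdef
  have hposA : IsPositive A := by simpa [hAdef] using! isPositive_one.adjoint_conj T
  have hsa : IsSelfAdjoint A := hposA.isSelfAdjoint
  have hspec : spectrum ℝ A ⊆ Set.Icc 0 (Real.exp (-1)) := by
    intro x hx
    constructor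
    · exact spectrum_nonneg_of_nonneg ((nonneg_iff_isPositive _).mpr hposA) hx
    · calc x ≤ |x| := le_abs_self x
        _ = ‖x‖ := (Real.norm_eq_abs x).symm
        _ ≤ ‖A‖ := spectrum.norm_le_norm_of_mem hx
        _ ≤ _ := hTnorm
  have hIci : spectrum ℝ A ⊆ Set.Ici 0 := hspec.trans Set.Icc_subset_Ici_self
  set g : ℝ → ℝ := genFun α with hgdef
  have hg : ContinuousOn g (spectrum ℝ A) := (genFun_continuousOn hα0).mono hIci
  have hp : ContinuousOn (fun t : ℝ => t ^ μ) (spectrum ℝ A) := (rpow_continuousOn hμ).mono hIci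
  have htg : ContinuousOn (fun t : ℝ => t * g t) (spectrum ℝ A) := continuousOn_id.mul hg
  have h1tg : ContinuousOn (fun t : ℝ => 1 - t * g t) (spectrum ℝ A) := continuousOn_const.sub htg
  have hbias : ContinuousOn (fun t : ℝ => (1 - t * g t) * t ^ μ) (spectrum ℝ A) := h1tg.mul hp
  have hgt : ContinuousOn (fun t : ℝ => g t * t) (spectrum ℝ A) := hg.mul continuousOn_id
  -- algebra: cfc g A * A = cfc (g·t) A
  have cgA : cfc g A * A = cfc (fun t => g t * t) A := by
    have h := cfc_mul g (fun x : ℝ => x) A hg continuousOn_id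
    rw [cfc_id' ℝ A hsa] at h
    exact h.symm
  -- key identity
  have c2 : cfc (fun t => (1 - t * g t) * t ^ μ) A w
      = xdag - cfc (fun t => t * g t) A xdag := by
    rw [hxdag, cfc_mul _ _ A h1tg hp, cfc_sub _ _ A continuousOn_const htg,
      cfc_const_one ℝ A, sub_mul, one_mul, sub_apply, ContinuousLinearMap.mul_apply]
  have c3 : cfc (fun t => t * g t) A xdag = (cfc g A ∘L adjoint T) (T xdag) := by
    have e : (cfc g A ∘L adjoint T) (T xdag) = (cfc g A * A) xdag := rfl
    rw [e, cgA]
    apply congrFun (congrArg _ _)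
    exact cfc_congr fun x _ => mul_comm x (g x)
  have key : xdag - cfc g A ((adjoint T) yδ)
      = cfc (fun t => (1 - t * g t) * t ^ μ) A w
        - (cfc g A ∘L adjoint T) (yδ - T xdag) := by
    rw [c2, map_sub, c3]
    have : cfc g A ((adjoint T) yδ) = (cfc g A ∘L adjoint T) yδ := rfl
    rw [this]
    abel
  -- bias bound
  have bias_bound : ‖cfc (fun t => (1 - t * g t) * t ^ μ) A w‖
      ≤ (2*θ/((μ-θ)*Real.exp 1))^(2*θ) * α ^ θ * ρ := by
    calc ‖cfc (fun t => (1 - t * g t) * t ^ μ) A w‖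
        ≤ ‖cfc (fun t => (1 - t * g t) * t ^ μ) A‖ * ‖w‖ := le_opNorm _ _
      _ ≤ ((2*θ/((μ-θ)*Real.exp 1))^(2*θ) * α ^ θ) * ρ := by
          apply mul_le_mul _ hw (norm_nonneg _) (by positivity)
          apply norm_cfc_le (by positivity)
          intro x hx
          rw [Real.norm_eq_abs]
          exact bias_ptwise hα0 hα1 hμ hθ0 hθ1 hθμ (hspec hx).1 (hspec hx).2
  -- noise bound
  set S : Y →L[ℂ] X := cfc g A ∘L adjoint T with hSdef
  have hgsa : IsSelfAdjoint (cfc g A) := IsSelfAdjoint.cfc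
  have hadjS : adjoint S = T ∘L cfc g A := by
    rw [hSdef, adjoint_comp, adjoint_adjoint, isSelfAdjoint_iff'.mp hgsa]
  have hSS : S ∘L adjoint S = cfc (fun t => g t * t * g t) A := by
    rw [hadjS, hSdef]
    have e : (cfc g A ∘L adjoint T) ∘L (T ∘L cfc g A) = (cfc g A * A) * cfc g A := by
      ext x; rfl
    rw [e, cgA, ← cfc_mul _ _ A hgt hg]
  have hnormS : ‖S‖ * ‖S‖ ≤ Real.exp 1 ^ 2 / (4 * α) := by
    have h1 : ‖S ∘L adjoint S‖ = ‖S‖ * ‖S‖ := by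
      have h2 := norm_adjoint_comp_self (adjoint S)
      have h3 : ‖adjoint S‖ = ‖S‖ :=
        (ContinuousLinearMap.adjoint (E := Y) (F := X) (𝕜 := ℂ)).norm_map S
      rwa [adjoint_adjoint, h3] at h2
    rw [← h1, hSS]
    apply norm_cfc_le (by positivity)
    intro x hx
    rw [Real.norm_eq_abs, abs_of_nonneg]
    · exact noise_ptwise hα0 hα1 (hspec hx).1 (hspec hx).2
    · have hx0 := (hspec hx).1
      have hg0 : 0 ≤ g x := by
        rcases eq_or_lt_of_le hx0 with h | h
        · simp [hgdef, genFun, ← h]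
        · have : g x = 1 / (x + (1 - Real.exp (Real.sqrt α * Real.log x))^2) := by
            simp [hgdef, genFun, h.ne']
          rw [this]; positivity
      positivity
  have hSle : ‖S‖ ≤ Real.exp 1 / (2 * Real.sqrt α) := by
    have hc : 0 < Real.exp 1 / (2 * Real.sqrt α) := by positivity
    have hcsq : (Real.exp 1 / (2 * Real.sqrt α)) * (Real.exp 1 / (2 * Real.sqrt α))
        = Real.exp 1 ^ 2 / (4 * α) := by
      rw [div_mul_div_comm]
      congr 1
      · ring
      · have : Real.sqrt α * Real.sqrt α = α := Real.mul_self_sqrt hα0.le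
        nlinarith
    nlinarith [norm_nonneg S, hnormS]
  -- combine
  have noise_bound : ‖S (yδ - T xdag)‖ ≤ Real.exp 1 / (2 * Real.sqrt α) * δ := by
    calc ‖S (yδ - T xdag)‖ ≤ ‖S‖ * ‖yδ - T xdag‖ := le_opNorm _ _
      _ ≤ Real.exp 1 / (2 * Real.sqrt α) * δ :=
          mul_le_mul hSle hyδ (norm_nonneg _) (by positivity)
  have total : ‖xdag - cfc g A ((adjoint T) yδ)‖
      ≤ (2*θ/((μ-θ)*Real.exp 1))^(2*θ) * α ^ θ * ρ + Real.exp 1 / (2 * Real.sqrt α) * δ := by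
    rw [key]
    exact (norm_sub_le _ _).trans (add_le_add bias_bound noise_bound)
  -- arithmetic
  have hαθ : α ^ θ = δ ^ (2*θ/(2*θ+1)) := by
    rw [hαdef, ← Real.rpow_mul hδ0.le]
    congr 1
    field_simp
  have hsqrtα : Real.sqrt α = δ ^ (1/(2*θ+1)) := by
    rw [hαdef, Real.sqrt_eq_rpow, ← Real.rpow_mul hδ0.le]
    congr 1
    field_simp
  have h2θ : (2*θ+1) ≠ 0 := by positivity
  have hnoise_eq : Real.exp 1 / (2 * Real.sqrt α) * δ
      = Real.exp 1 / 2 * δ ^ (2*θ/(2*θ+1)) := by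
    rw [hsqrtα]
    rw [show Real.exp 1 / (2 * δ ^ ((1:ℝ)/(2*θ+1))) * δ
        = Real.exp 1 / 2 * (δ ^ (1:ℝ) / δ ^ ((1:ℝ)/(2*θ+1))) from by
      rw [Real.rpow_one]; ring]
    rw [← Real.rpow_sub hδ0]
    congr 2
    field_simp
    ring
  calc ‖xdag - cfc g A ((adjoint T) yδ)‖
      ≤ (2*θ/((μ-θ)*Real.exp 1))^(2*θ) * α ^ θ * ρ + Real.exp 1 / (2 * Real.sqrt α) * δ := total
    _ = ((2*θ/((μ-θ)*Real.exp 1))^(2*θ) * ρ + Real.exp 1 / 2) * δ ^ (2*θ/(2*θ+1)) := by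
        rw [hαθ, hnoise_eq]; ring

end Aux

/-- Let `μ > 0`, `ρ > 0`, `‖T*T‖ ≤ e⁻¹`, and `x† = (T*T)^μ w` with `‖w‖ ≤ ρ`
(Hölder source condition), `T` a bounded injective operator between complex Hilbert
spaces. If `μ ≤ 1`, then for every `σ` with `0 < σ < μ` there exist an a-priori
parameter choice `α : (0,∞) → (0,∞)`, a constant `C > 0` and `δ̄ > 0` such that for
every `δ ∈ (0,δ̄]` and every `y^δ` with `‖y^δ − T x†‖ ≤ δ`, the regularized solution
`x^δ_{α(δ)} = g_{α(δ)}(T*T)T*y^δ` satisfies `‖x† − x^δ_{α(δ)}‖ ≤ C·δ^{2σ/(2σ+1)}`.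
If `μ > 1`, there exist such `α, C, δ̄` with `‖x† − x^δ_{α(δ)}‖ ≤ C·δ^{2/3}`. -/
theorem stmt16 {X Y : Type*} [NormedAddCommGroup X] [InnerProductSpace ℂ X]
    [CompleteSpace X] [NormedAddCommGroup Y] [InnerProductSpace ℂ Y] [CompleteSpace Y]
    (T : X →L[ℂ] Y) (hTinj : Function.Injective T)
    (hTnorm : ‖(adjoint T) ∘L T‖ ≤ Real.exp (-1))
    (μ ρ : ℝ) (hμ : 0 < μ) (hρ : 0 < ρ)
    (w : X) (hw : ‖w‖ ≤ ρ) (xdag : X)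
    (hxdag : xdag = cfc (fun t : ℝ => t ^ μ) ((adjoint T) ∘L T) w) :
    (μ ≤ 1 → ∀ σ : ℝ, 0 < σ → σ < μ →
      ∃ αfun : ℝ → ℝ, (∀ δ > (0 : ℝ), 0 < αfun δ) ∧
        ∃ C > (0 : ℝ), ∃ δbar > (0 : ℝ), ∀ δ ∈ Set.Ioc (0 : ℝ) δbar, ∀ yδ : Y,
          ‖yδ - T xdag‖ ≤ δ →
          ‖xdag - cfc (genFun (αfun δ)) ((adjoint T) ∘L T) ((adjoint T) yδ)‖ ≤
            C * δ ^ (2 * σ / (2 * σ + 1))) ∧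
    (1 < μ →
      ∃ αfun : ℝ → ℝ, (∀ δ > (0 : ℝ), 0 < αfun δ) ∧
        ∃ C > (0 : ℝ), ∃ δbar > (0 : ℝ), ∀ δ ∈ Set.Ioc (0 : ℝ) δbar, ∀ yδ : Y,
          ‖yδ - T xdag‖ ≤ δ →
          ‖xdag - cfc (genFun (αfun δ)) ((adjoint T) ∘L T) ((adjoint T) yδ)‖ ≤
            C * δ ^ ((2 : ℝ) / 3)) := by
  constructor
  · intro hμ1 σ hσ0 hσμ
    set θ : ℝ := (σ + μ) / 2 with hθdef
    have hθ0 : 0 < θ := by positivity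
    have hθμ : θ < μ := by rw [hθdef]; linarith
    have hθ1 : θ ≤ 1 := by linarith
    have hσθ : σ ≤ θ := by rw [hθdef]; linarith
    have hμθ : 0 < μ - θ := sub_pos.mpr hθμ
    refine ⟨fun δ => δ ^ (2/(2*θ+1)), fun δ hδ => Real.rpow_pos_of_pos hδ _,
      (2*θ/((μ-θ)*Real.exp 1))^(2*θ) * ρ + Real.exp 1 / 2, by positivity, 1, one_pos,
      fun δ hδ yδ hyδ => ?_⟩
    have hδ0 := hδ.1
    have hδ1 := hδ.2
    have hexp : 2 * σ / (2 * σ + 1) ≤ 2 * θ / (2 * θ + 1) := by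
      rw [div_le_div_iff₀ (by positivity) (by positivity)]
      nlinarith
    calc ‖xdag - cfc (genFun (δ ^ (2/(2*θ+1)))) ((adjoint T) ∘L T) ((adjoint T) yδ)‖
        ≤ ((2*θ/((μ-θ)*Real.exp 1))^(2*θ) * ρ + Real.exp 1 / 2) * δ ^ (2*θ/(2*θ+1)) :=
          master T hTnorm hμ hρ hw hxdag hθ0 hθ1 hθμ hδ0 hδ1 hyδ
      _ ≤ ((2*θ/((μ-θ)*Real.exp 1))^(2*θ) * ρ + Real.exp 1 / 2) * δ ^ (2*σ/(2*σ+1)) := by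
          apply mul_le_mul_of_nonneg_left
            (Real.rpow_le_rpow_of_exponent_ge hδ0 hδ1 hexp) (by positivity)
  · intro hμ1
    have hθ0 : (0:ℝ) < 1 := one_pos
    have hθμ : (1:ℝ) < μ := hμ1
    have hμθ : 0 < μ - 1 := sub_pos.mpr hμ1
    refine ⟨fun δ => δ ^ (2/(2*(1:ℝ)+1)), fun δ hδ => Real.rpow_pos_of_pos hδ _,
      (2*1/((μ-1)*Real.exp 1))^(2*(1:ℝ)) * ρ + Real.exp 1 / 2, by positivity, 1, one_pos,
      fun δ hδ yδ hyδ => ?_⟩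
    have h := master T hTnorm hμ hρ hw hxdag hθ0 le_rfl hθμ hδ.1 hδ.2 hyδ
    have he : 2 * (1:ℝ) / (2 * 1 + 1) = (2:ℝ)/3 := by norm_num
    rw [he] at h
    exact h
end
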